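/- arXiv:2309.06952 — 3 statements merged into one kernel-verified Lean document; each statement's English description precedes it below -/
import Mathlib

section
/- Let X_t = σ ∫_0^t e^(-λ(t-s)) dW_s with λ, σ > 0 and fixed T > 0. Then Var[∫_0^T X_t^2 dt] ≤ C σ^4 / λ^3 for a constant C depending only on T, and moreover Var[∫_0^T X_t^2 dt] ∼ σ^4/λ^3 up to absolute constants as λ → ∞. -/
open MeasureTheory

/-- The variance of `∫₀ᵀ X_t² dt` for the Ornstein–Uhlenbeck process started at 0,
expressed through the moment formulas
`E[X_t²] = σ²(1-e^{-2λt})/(2λ)` and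
`E[X_t²X_s²] = σ⁴(1/(2λ))²[1 - e^{-2λ(s∧t)} + 2e^{-2λ|t-s|} - 5e^{-2λ(s∨t)} + 3e^{-2λ(t+s)}]`. -/
noncomputable def ouIntVar (l σ T : ℝ) : ℝ :=
  (∫ t in Set.Ioc (0 : ℝ) T, ∫ s in Set.Ioc (0 : ℝ) T,
    σ ^ 4 * (1 / (2 * l)) ^ 2 *
      (1 - Real.exp (-2 * l * min s t) + 2 * Real.exp (-2 * l * |t - s|)
        - 5 * Real.exp (-2 * l * max s t) + 3 * Real.exp (-2 * l * (t + s))))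
  - (∫ t in Set.Ioc (0 : ℝ) T, σ ^ 2 / (2 * l) * (1 - Real.exp (-2 * l * t))) ^ 2

lemma hd_exp (c x : ℝ) : HasDerivAt (fun y : ℝ => Real.exp (c*y)) (c * Real.exp (c*x)) x := by
  simpa [mul_comm] using ((hasDerivAt_id x).const_mul c).exp

lemma hd_exp_sub (c t x : ℝ) : HasDerivAt (fun y : ℝ => Real.exp (c*(t-y))) (-c * Real.exp (c*(t-x))) x := by
  have h : HasDerivAt (fun y : ℝ => c*(t-y)) (-c) x := by
    simpa using ((hasDerivAt_id x).const_sub t).const_mul c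
  simpa [mul_comm] using h.exp

lemma hd_exp_sub' (c t x : ℝ) : HasDerivAt (fun y : ℝ => Real.exp (c*(y-t))) (c * Real.exp (c*(x-t))) x := by
  have h : HasDerivAt (fun y : ℝ => c*(y-t)) c x := by
    simpa using ((hasDerivAt_id x).sub_const t).const_mul c
  simpa [mul_comm] using h.exp

lemma hd_exp_add (c t x : ℝ) : HasDerivAt (fun y : ℝ => Real.exp (c*(t+y))) (c * Real.exp (c*(t+x))) x := by
  have h : HasDerivAt (fun y : ℝ => c*(t+y)) c x := by
    simpa using ((hasDerivAt_id x).const_add t).const_mul c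
  simpa [mul_comm] using h.exp

lemma inner_eq (l T t : ℝ) (hl : 0 < l) (ht0 : 0 ≤ t) (htT : t ≤ T) :
    (∫ s in Set.Ioc (0:ℝ) T, (1 - Real.exp (-2*l*min s t) + 2*Real.exp (-2*l*|t - s|)
        - 5*Real.exp (-2*l*max s t) + 3*Real.exp (-2*l*(t + s))))
    = (T + 3/(2*l) + 5*Real.exp (-2*l*T)/(2*l)) - (T + 3/(2*l))*Real.exp (-2*l*t)
      - 4*t*Real.exp (-2*l*t) - Real.exp (-2*l*(T-t))/l
      - 3/(2*l)*Real.exp (-2*l*T)*Real.exp (-2*l*t) := by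
  have hl' : l ≠ 0 := hl.ne'
  have hT : (0:ℝ) ≤ T := le_trans ht0 htT
  rw [← intervalIntegral.integral_of_le hT]
  have hi1 : IntervalIntegrable (fun s : ℝ => 1 - Real.exp (-2*l*min s t) + 2*Real.exp (-2*l*|t - s|)
        - 5*Real.exp (-2*l*max s t) + 3*Real.exp (-2*l*(t + s))) volume 0 t :=
    (by fun_prop : Continuous fun s : ℝ => 1 - Real.exp (-2*l*min s t) + 2*Real.exp (-2*l*|t - s|)
        - 5*Real.exp (-2*l*max s t) + 3*Real.exp (-2*l*(t + s))).intervalIntegrable 0 t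
  have hi2 : IntervalIntegrable (fun s : ℝ => 1 - Real.exp (-2*l*min s t) + 2*Real.exp (-2*l*|t - s|)
        - 5*Real.exp (-2*l*max s t) + 3*Real.exp (-2*l*(t + s))) volume t T :=
    (by fun_prop : Continuous fun s : ℝ => 1 - Real.exp (-2*l*min s t) + 2*Real.exp (-2*l*|t - s|)
        - 5*Real.exp (-2*l*max s t) + 3*Real.exp (-2*l*(t + s))).intervalIntegrable t T
  rw [← intervalIntegral.integral_add_adjacent_intervals hi1 hi2]
  have e1 : (∫ s in (0:ℝ)..t, (1 - Real.exp (-2*l*min s t) + 2*Real.exp (-2*l*|t - s|)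
        - 5*Real.exp (-2*l*max s t) + 3*Real.exp (-2*l*(t + s))))
      = ∫ s in (0:ℝ)..t, (1 - Real.exp (-2*l*s) + 2*Real.exp (-2*l*(t-s))
        - 5*Real.exp (-2*l*t) + 3*Real.exp (-2*l*(t + s))) := by
    apply intervalIntegral.integral_congr
    intro s hs
    rw [Set.uIcc_of_le ht0] at hs
    simp only [min_eq_left hs.2, max_eq_right hs.2, abs_of_nonneg (sub_nonneg.2 hs.2)]
  have e2 : (∫ s in t..T, (1 - Real.exp (-2*l*min s t) + 2*Real.exp (-2*l*|t - s|)
        - 5*Real.exp (-2*l*max s t) + 3*Real.exp (-2*l*(t + s))))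
      = ∫ s in t..T, (1 - Real.exp (-2*l*t) + 2*Real.exp (-2*l*(s-t))
        - 5*Real.exp (-2*l*s) + 3*Real.exp (-2*l*(t + s))) := by
    apply intervalIntegral.integral_congr
    intro s hs
    rw [Set.uIcc_of_le htT] at hs
    simp only [min_eq_right hs.1, max_eq_left hs.1, abs_of_nonpos (sub_nonpos.2 hs.1), neg_sub]
  rw [e1, e2]
  have f1 : (∫ s in (0:ℝ)..t, (1 - Real.exp (-2*l*s) + 2*Real.exp (-2*l*(t-s))
        - 5*Real.exp (-2*l*t) + 3*Real.exp (-2*l*(t + s))))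
      = (fun s : ℝ => s + Real.exp (-2*l*s)/(2*l) + Real.exp (-2*l*(t-s))/l
          - 5*Real.exp (-2*l*t)*s - 3/(2*l)*Real.exp (-2*l*(t+s))) t
        - (fun s : ℝ => s + Real.exp (-2*l*s)/(2*l) + Real.exp (-2*l*(t-s))/l
          - 5*Real.exp (-2*l*t)*s - 3/(2*l)*Real.exp (-2*l*(t+s))) 0 := by
    apply intervalIntegral.integral_eq_sub_of_hasDerivAt
      (f := fun s : ℝ => s + Real.exp (-2*l*s)/(2*l) + Real.exp (-2*l*(t-s))/l
          - 5*Real.exp (-2*l*t)*s - 3/(2*l)*Real.exp (-2*l*(t+s)))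
    · intro x hx
      have h := ((((hasDerivAt_id x).add ((hd_exp (-2*l) x).div_const (2*l))).add
          ((hd_exp_sub (-2*l) t x).div_const l)).sub
          ((hasDerivAt_id x).const_mul (5*Real.exp (-2*l*t)))).sub
          ((hd_exp_add (-2*l) t x).const_mul (3/(2*l)))
      refine h.congr_deriv ?_
      field_simp
      ring
    · exact (by fun_prop : Continuous fun s : ℝ => 1 - Real.exp (-2*l*s) + 2*Real.exp (-2*l*(t-s))
        - 5*Real.exp (-2*l*t) + 3*Real.exp (-2*l*(t + s))).intervalIntegrable 0 t
  have f2 : (∫ s in t..T, (1 - Real.exp (-2*l*t) + 2*Real.exp (-2*l*(s-t))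
        - 5*Real.exp (-2*l*s) + 3*Real.exp (-2*l*(t + s))))
      = (fun s : ℝ => s - Real.exp (-2*l*t)*s - Real.exp (-2*l*(s-t))/l
          + 5/(2*l)*Real.exp (-2*l*s) - 3/(2*l)*Real.exp (-2*l*(t+s))) T
        - (fun s : ℝ => s - Real.exp (-2*l*t)*s - Real.exp (-2*l*(s-t))/l
          + 5/(2*l)*Real.exp (-2*l*s) - 3/(2*l)*Real.exp (-2*l*(t+s))) t := by
    apply intervalIntegral.integral_eq_sub_of_hasDerivAt
      (f := fun s : ℝ => s - Real.exp (-2*l*t)*s - Real.exp (-2*l*(s-t))/l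
          + 5/(2*l)*Real.exp (-2*l*s) - 3/(2*l)*Real.exp (-2*l*(t+s)))
    · intro x hx
      have h := ((((hasDerivAt_id x).sub ((hasDerivAt_id x).const_mul (Real.exp (-2*l*t)))).sub
          ((hd_exp_sub' (-2*l) t x).div_const l)).add
          ((hd_exp (-2*l) x).const_mul (5/(2*l)))).sub
          ((hd_exp_add (-2*l) t x).const_mul (3/(2*l)))
      refine h.congr_deriv ?_
      field_simp
      ring
    · exact (by fun_prop : Continuous fun s : ℝ => 1 - Real.exp (-2*l*t) + 2*Real.exp (-2*l*(s-t))
        - 5*Real.exp (-2*l*s) + 3*Real.exp (-2*l*(t + s))).intervalIntegrable t T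
  rw [f1, f2]
  simp only [sub_self, mul_zero, Real.exp_zero, sub_zero, add_zero, mul_one]
  have hx : Real.exp (-2*l*(t+T)) = Real.exp (-2*l*T) * Real.exp (-2*l*t) := by
    rw [← Real.exp_add]; congr 1; ring
  rw [hx]
  field_simp
  ring

lemma single_eq (l σ T : ℝ) (hl : 0 < l) (hT : (0:ℝ) ≤ T) :
    (∫ t in Set.Ioc (0:ℝ) T, σ^2/(2*l)*(1 - Real.exp (-2*l*t)))
      = σ^2/(2*l)*(T + Real.exp (-2*l*T)/(2*l) - 1/(2*l)) := by
  have hl' : l ≠ 0 := hl.ne'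
  rw [← intervalIntegral.integral_of_le hT]
  have h : (∫ t in (0:ℝ)..T, σ^2/(2*l)*(1 - Real.exp (-2*l*t)))
      = (fun t : ℝ => σ^2/(2*l)*(t + Real.exp (-2*l*t)/(2*l))) T
        - (fun t : ℝ => σ^2/(2*l)*(t + Real.exp (-2*l*t)/(2*l))) 0 := by
    apply intervalIntegral.integral_eq_sub_of_hasDerivAt
      (f := fun t : ℝ => σ^2/(2*l)*(t + Real.exp (-2*l*t)/(2*l)))
    · intro x hx
      have h := ((hasDerivAt_id x).add ((hd_exp (-2*l) x).div_const (2*l))).const_mul (σ^2/(2*l))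
      refine h.congr_deriv ?_
      field_simp
      ring
    · exact (by fun_prop : Continuous fun t : ℝ => σ^2/(2*l)*(1 - Real.exp (-2*l*t))).intervalIntegrable 0 T
  rw [h]
  simp only [mul_zero, Real.exp_zero, zero_add]
  field_simp

lemma ou_closed (l σ T : ℝ) (hl : 0 < l) (hT : (0:ℝ) ≤ T) :
    ouIntVar l σ T = σ^4 * (4*l*T + 8*l*T*Real.exp (-2*l*T) + 4*Real.exp (-2*l*T) - 5
      + Real.exp (-2*l*T)^2) / (8*l^4) := by
  have hl' : l ≠ 0 := hl.ne'
  unfold ouIntVar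
  rw [single_eq l σ T hl hT]
  simp only [MeasureTheory.integral_const_mul]
  rw [← intervalIntegral.integral_of_le hT]
  have hG : (∫ t in (0:ℝ)..T,
        ∫ s in Set.Ioc (0:ℝ) T, (1 - Real.exp (-2 * l * min s t) + 2 * Real.exp (-2 * l * |t - s|)
          - 5 * Real.exp (-2 * l * max s t) + 3 * Real.exp (-2 * l * (t + s))))
      = ∫ t in (0:ℝ)..T,
        ((T + 3/(2*l) + 5*Real.exp (-2*l*T)/(2*l)) - (T + 3/(2*l))*Real.exp (-2*l*t)
          - 4*t*Real.exp (-2*l*t) - Real.exp (-2*l*(T-t))/l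
          - 3/(2*l)*Real.exp (-2*l*T)*Real.exp (-2*l*t)) := by
    apply intervalIntegral.integral_congr
    intro t ht
    rw [Set.uIcc_of_le hT] at ht
    simp only [inner_eq l T t hl ht.1 ht.2]
  rw [hG]
  have hH : (∫ t in (0:ℝ)..T,
        ((T + 3/(2*l) + 5*Real.exp (-2*l*T)/(2*l)) - (T + 3/(2*l))*Real.exp (-2*l*t)
          - 4*t*Real.exp (-2*l*t) - Real.exp (-2*l*(T-t))/l
          - 3/(2*l)*Real.exp (-2*l*T)*Real.exp (-2*l*t)))
      = (fun t : ℝ => (T + 3/(2*l) + 5*Real.exp (-2*l*T)/(2*l))*t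
          + (T + 3/(2*l))*Real.exp (-2*l*t)/(2*l) + (2*t/l + 1/l^2)*Real.exp (-2*l*t)
          - Real.exp (-2*l*(T-t))/(2*l^2)
          + 3/(4*l^2)*Real.exp (-2*l*T)*Real.exp (-2*l*t)) T
        - (fun t : ℝ => (T + 3/(2*l) + 5*Real.exp (-2*l*T)/(2*l))*t
          + (T + 3/(2*l))*Real.exp (-2*l*t)/(2*l) + (2*t/l + 1/l^2)*Real.exp (-2*l*t)
          - Real.exp (-2*l*(T-t))/(2*l^2)
          + 3/(4*l^2)*Real.exp (-2*l*T)*Real.exp (-2*l*t)) 0 := by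
    apply intervalIntegral.integral_eq_sub_of_hasDerivAt
      (f := fun t : ℝ => (T + 3/(2*l) + 5*Real.exp (-2*l*T)/(2*l))*t
          + (T + 3/(2*l))*Real.exp (-2*l*t)/(2*l) + (2*t/l + 1/l^2)*Real.exp (-2*l*t)
          - Real.exp (-2*l*(T-t))/(2*l^2)
          + 3/(4*l^2)*Real.exp (-2*l*T)*Real.exp (-2*l*t))
    · intro x hx
      have h1 := (hasDerivAt_id x).const_mul (T + 3/(2*l) + 5*Real.exp (-2*l*T)/(2*l))
      have h2 := ((hd_exp (-2*l) x).const_mul (T + 3/(2*l))).div_const (2*l)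
      have h3 := ((((hasDerivAt_id x).const_mul 2).div_const l).add_const (1/l^2)).mul
        (hd_exp (-2*l) x)
      have h4 := (hd_exp_sub (-2*l) T x).div_const (2*l^2)
      have h5 := (hd_exp (-2*l) x).const_mul (3/(4*l^2)*Real.exp (-2*l*T))
      have h := (((h1.add h2).add h3).sub h4).add h5
      refine h.congr_deriv ?_
      simp only [id_eq]
      field_simp
      ring
    · exact (by fun_prop : Continuous fun t : ℝ =>
        (T + 3/(2*l) + 5*Real.exp (-2*l*T)/(2*l)) - (T + 3/(2*l))*Real.exp (-2*l*t)
          - 4*t*Real.exp (-2*l*t) - Real.exp (-2*l*(T-t))/l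
          - 3/(2*l)*Real.exp (-2*l*T)*Real.exp (-2*l*t)).intervalIntegrable 0 T
  rw [hH]
  simp only [sub_self, mul_zero, Real.exp_zero, sub_zero, mul_one, add_zero, zero_add]
  field_simp
  ring

lemma exp_facts (l T : ℝ) (hl : 0 < l) (hT : 0 < T) :
    Real.exp (-2*l*T) * (1 + 2*l*T) ≤ 1 := by
  have h1 : 1 + 2*l*T ≤ Real.exp (2*l*T) := by
    have := Real.add_one_le_exp (2*l*T); linarith
  have h2 : (0:ℝ) ≤ Real.exp (-2*l*T) := (Real.exp_pos _).le
  calc Real.exp (-2*l*T) * (1 + 2*l*T) ≤ Real.exp (-2*l*T) * Real.exp (2*l*T) := by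
        exact mul_le_mul_of_nonneg_left h1 h2
    _ = 1 := by rw [← Real.exp_add]; norm_num


/-- `Var[∫₀ᵀ X_t² dt] ≤ C σ⁴/λ³` with `C` depending only on `T`, and for large `λ`
it is comparable to `σ⁴/λ³` up to constants. -/
theorem stmt6 (T : ℝ) (hT : 0 < T) :
    (∃ C : ℝ, 0 < C ∧ ∀ l σ : ℝ, 0 < l → 0 < σ →
      ouIntVar l σ T ≤ C * σ ^ 4 / l ^ 3) ∧
    (∃ c C l₀ : ℝ, 0 < c ∧ 0 < C ∧ 0 < l₀ ∧ ∀ l σ : ℝ, l₀ ≤ l → 0 < σ →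
      c * σ ^ 4 / l ^ 3 ≤ ouIntVar l σ T ∧ ouIntVar l σ T ≤ C * σ ^ 4 / l ^ 3) := by
  have hupper : ∀ l σ : ℝ, 0 < l → 0 < σ → ouIntVar l σ T ≤ T/2 * σ ^ 4 / l ^ 3 := by
    intro l σ hl hσ
    rw [ou_closed l σ T hl hT.le]
    set K := Real.exp (-2*l*T) with hK
    have hK0 : 0 < K := Real.exp_pos _
    have hK1 : K ≤ 1 := Real.exp_le_one_iff.mpr (by nlinarith)
    have hKT : K * (1 + 2*l*T) ≤ 1 := exp_facts l T hl hT
    rw [div_le_div_iff₀ (by positivity) (by positivity)]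
    have hnum : 4*l*T + 8*l*T*K + 4*K - 5 + K^2 ≤ 4*l*T := by nlinarith
    have h1 : σ^4 * (4*l*T + 8*l*T*K + 4*K - 5 + K^2) ≤ σ^4 * (4*l*T) :=
      mul_le_mul_of_nonneg_left hnum (by positivity)
    nlinarith [mul_le_mul_of_nonneg_right h1 (pow_nonneg hl.le 3)]
  constructor
  · exact ⟨T/2, by positivity, hupper⟩
  · refine ⟨T/4, T/2, 5/(2*T), by positivity, by positivity, by positivity, fun l σ hll hσ => ?_⟩
    have hl : 0 < l := lt_of_lt_of_le (by positivity) hll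
    constructor
    · rw [ou_closed l σ T hl hT.le]
      set K := Real.exp (-2*l*T) with hK
      have hK0 : 0 < K := Real.exp_pos _
      have h5 : 5 ≤ 2*l*T := by
        rw [div_le_iff₀ (by positivity)] at hll
        nlinarith
      rw [div_le_div_iff₀ (by positivity) (by positivity)]
      have hnum : 2*l*T ≤ 4*l*T + 8*l*T*K + 4*K - 5 + K^2 := by
        nlinarith [mul_pos (mul_pos (by positivity : (0:ℝ) < 8*l) hT) hK0, sq_nonneg K]
      have h1 : σ^4 * (2*l*T) ≤ σ^4 * (4*l*T + 8*l*T*K + 4*K - 5 + K^2) :=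
        mul_le_mul_of_nonneg_left hnum (by positivity)
      nlinarith [mul_le_mul_of_nonneg_right h1 (pow_nonneg hl.le 4)]
    · exact hupper l σ hl hσ
end

section
/- (Law of large numbers for independent sequences) Let (ξ_n) be a sequence of independent real random variables with finite variances and (b_n) an increasing sequence of positive reals with b_n → ∞ such that Σ_n Var(ξ_n)/b_n^2 < ∞. Then (Σ_{k=1}^n (ξ_k - E ξ_k))/b_n → 0 almost surely. -/
open MeasureTheory ProbabilityTheory Filter

open Finset
open scoped ENNReal NNReal


lemma aux_toeplitz {w e b : ℕ → ℝ} (hw : ∀ i, 0 ≤ w i) (hb : ∀ n, 0 < b n)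
    (hbtop : Tendsto b atTop atTop) (hwb : ∀ n, ∑ i ∈ range n, w i ≤ b n)
    (he : Tendsto e atTop (nhds 0)) :
    Tendsto (fun n => (∑ i ∈ range n, w i * e i) / b n) atTop (nhds 0) := by
  rw [Metric.tendsto_atTop]
  intro δ hδ
  obtain ⟨N, hN⟩ := (Metric.tendsto_atTop.1 he) (δ / 2) (by positivity)
  set C := ∑ i ∈ range N, w i * |e i| with hC
  have hC0 : 0 ≤ C := Finset.sum_nonneg fun i _ => mul_nonneg (hw i) (abs_nonneg _)
  obtain ⟨M, hM⟩ := eventually_atTop.1 (hbtop.eventually_ge_atTop (2 * C / δ + 1))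
  refine ⟨max N M, fun n hn => ?_⟩
  have hNn : N ≤ n := le_trans (le_max_left _ _) hn
  have hbn : 2 * C / δ + 1 ≤ b n := hM n (le_trans (le_max_right _ _) hn)
  have hbnpos := hb n
  rw [Real.dist_eq, sub_zero, abs_div, abs_of_pos hbnpos, div_lt_iff₀ hbnpos]
  have key : |∑ i ∈ range n, w i * e i| ≤ C + δ / 2 * b n := by
    calc |∑ i ∈ range n, w i * e i| ≤ ∑ i ∈ range n, |w i * e i| := Finset.abs_sum_le_sum_abs _ _
    _ = ∑ i ∈ range n, w i * |e i| := by
        refine Finset.sum_congr rfl fun i _ => ?_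
        rw [abs_mul, abs_of_nonneg (hw i)]
    _ = C + ∑ i ∈ Finset.Ico N n, w i * |e i| := by
        rw [hC, Finset.sum_range_add_sum_Ico _ hNn]
    _ ≤ C + ∑ i ∈ Finset.Ico N n, w i * (δ / 2) := by
        refine add_le_add_right (Finset.sum_le_sum fun i hi => ?_) C
        have := hN i (Finset.mem_Ico.1 hi).1
        rw [Real.dist_eq, sub_zero] at this
        exact mul_le_mul_of_nonneg_left this.le (hw i)
    _ = C + (∑ i ∈ Finset.Ico N n, w i) * (δ / 2) := by rw [Finset.sum_mul]
    _ ≤ C + (∑ i ∈ range n, w i) * (δ / 2) := by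
        refine add_le_add_right (mul_le_mul_of_nonneg_right ?_ (by linarith)) C
        exact (Finset.sum_le_sum_of_subset_of_nonneg
            (by intro x hx; simp at hx ⊢; omega) fun i _ _ => hw i)
    _ ≤ C + b n * (δ / 2) := by
        refine add_le_add_right (mul_le_mul_of_nonneg_right (hwb n) (by linarith)) C
    _ = C + δ / 2 * b n := by ring
  refine lt_of_le_of_lt key ?_
  have h1 : C < δ / 2 * b n := by
    have h2 : δ / 2 * (2 * C / δ + 1) = C + δ / 2 := by field_simp
    have h3 := mul_le_mul_of_nonneg_left hbn (le_of_lt (half_pos hδ))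
    linarith
  linarith

/-- Kronecker's lemma. -/
lemma aux_kronecker {b u : ℕ → ℝ} (hmono : Monotone b) (hb : ∀ n, 0 < b n)
    (hbtop : Tendsto b atTop atTop) {L : ℝ}
    (h : Tendsto (fun n => ∑ k ∈ range n, u k / b k) atTop (nhds L)) :
    Tendsto (fun n => (∑ k ∈ range n, u k) / b n) atTop (nhds 0) := by
  set s : ℕ → ℝ := fun n => ∑ k ∈ range n, u k / b k with hs
  set e : ℕ → ℝ := fun n => s (n + 1) - L with he
  have he0 : Tendsto e atTop (nhds 0) := by
    have := (h.comp (tendsto_add_atTop_nat 1)).sub_const L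
    simpa using this
  set w : ℕ → ℝ := fun i => b (i + 1) - b i with hw
  have hw0 : ∀ i, 0 ≤ w i := fun i => sub_nonneg.2 (hmono (Nat.le_succ i))
  have habel : ∀ n, ∑ k ∈ range (n + 1), u k
      = b n * s (n + 1) - ∑ i ∈ range n, w i * s (i + 1) := by
    intro n
    have := Finset.sum_range_by_parts (f := b) (g := fun k => u k / b k) (n := n + 1)
    simp only [smul_eq_mul, Nat.add_sub_cancel] at this
    have hident : ∀ k, b k * (u k / b k) = u k := fun k => by
      rw [mul_comm, div_mul_cancel₀ _ (hb k).ne']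
    calc ∑ k ∈ range (n + 1), u k = ∑ k ∈ range (n + 1), b k * (u k / b k) := by
          exact (Finset.sum_congr rfl fun k _ => (hident k).symm)
      _ = b n * s (n + 1) - ∑ i ∈ range n, w i * s (i + 1) := by
          rw [this]
  -- rewrite the target at n+1
  have key : ∀ n, (∑ k ∈ range (n + 1), u k) / b (n + 1)
      = b n * e n / b (n + 1) + L * b 0 / b (n + 1)
        - (∑ i ∈ range n, w i * e i) / b (n + 1) := by
    intro n
    have hsum_e : ∑ i ∈ range n, w i * s (i + 1)
        = ∑ i ∈ range n, w i * e i + (b n - b 0) * L := by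
      have : ∀ i, w i * s (i + 1) = w i * e i + w i * L := fun i => by
        simp only [he]; ring
      rw [Finset.sum_congr rfl fun i _ => this i, Finset.sum_add_distrib, ← Finset.sum_mul,
        Finset.sum_range_sub (f := b)]
    rw [habel n, hsum_e]
    have : b n * s (n + 1) = b n * e n + b n * L := by simp only [he]; ring
    rw [this]
    field_simp
    ring
  have t1 : Tendsto (fun n => b n * e n / b (n + 1)) atTop (nhds 0) := by
    have habs : Tendsto (fun n => |e n|) atTop (nhds 0) := by simpa using he0.abs
    apply squeeze_zero_norm _ habs
    intro n
    rw [Real.norm_eq_abs, abs_div, abs_of_pos (hb (n + 1)), div_le_iff₀ (hb (n + 1)),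
      abs_mul, abs_of_pos (hb n)]
    have : b n ≤ b (n + 1) := hmono (Nat.le_succ n)
    nlinarith [abs_nonneg (e n), hb n]
  have t2 : Tendsto (fun n => L * b 0 / b (n + 1)) atTop (nhds 0) := by
    apply Tendsto.div_atTop tendsto_const_nhds
    exact hbtop.comp (tendsto_add_atTop_nat 1)
  have t3 : Tendsto (fun n => (∑ i ∈ range n, w i * e i) / b (n + 1)) atTop (nhds 0) := by
    refine aux_toeplitz hw0 (fun n => hb (n + 1)) (hbtop.comp (tendsto_add_atTop_nat 1))
      (fun n => ?_) he0
    have : ∑ i ∈ range n, w i = b n - b 0 := Finset.sum_range_sub (f := b) n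
    rw [this]
    have := (hb 0).le
    have := hmono (Nat.le_succ n)
    linarith
  have : Tendsto (fun n => (∑ k ∈ range (n + 1), u k) / b (n + 1)) atTop (nhds 0) := by
    have := (t1.add t2).sub t3
    rw [show (0 : ℝ) + 0 - 0 = 0 by ring] at this
    exact this.congr fun n => (key n).symm
  exact (tendsto_add_atTop_iff_nat 1).1 this
section aux
variable {Ω : Type*} {m : MeasurableSpace Ω} {μ : Measure Ω}

lemma aux_evar_shift [IsProbabilityMeasure μ] (X : Ω → ℝ) (c : ℝ) (hX : Integrable X μ) :
    evariance (fun ω => X ω - c) μ = evariance X μ := by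
  have hm : μ[fun ω => X ω - c] = μ[X] - c := by
    rw [integral_sub hX (integrable_const c), integral_const]
    simp
  unfold evariance
  rw [hm]
  congr 1 with ω
  congr 2
  ring

lemma aux_var_div [IsProbabilityMeasure μ] (X : Ω → ℝ) (c : ℝ) (b : ℝ) (hb : 0 < b)
    (hX : Integrable X μ) :
    variance (fun ω => (X ω - c) / b) μ = variance X μ / b ^ 2 := by
  have h1 : (fun ω => (X ω - c) / b) = fun ω => b⁻¹ * (X ω - c) := by
    funext ω; rw [div_eq_inv_mul]
  rw [h1, variance_const_mul, variance, variance, aux_evar_shift X c hX]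
  rw [div_eq_inv_mul, ← inv_pow]

end aux


/-- Law of large numbers for independent sequences: if `(ξ_n)` are independent with
finite variances, `b_n` increasing to `∞` and `∑ Var(ξ_n)/b_n² < ∞`, then
`(∑_{k<n} (ξ_k - Eξ_k))/b_n → 0` almost surely. -/
theorem stmt9 {Ω : Type*} [MeasurableSpace Ω] (μ : Measure Ω) [IsProbabilityMeasure μ]
    (ξ : ℕ → Ω → ℝ) (hmeas : ∀ n, Measurable (ξ n))
    (hL2 : ∀ n, MemLp (ξ n) 2 μ)
    (hindep : iIndepFun ξ μ)
    (b : ℕ → ℝ) (hmono : Monotone b) (hbpos : ∀ n, 0 < b n)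
    (hbtop : Tendsto b atTop atTop)
    (hsum : Summable fun n => variance (ξ n) μ / (b n) ^ 2) :
    ∀ᵐ ω ∂μ, Tendsto
      (fun n => (∑ k ∈ Finset.range n, (ξ k ω - μ[ξ k])) / b n) atTop (nhds 0) := by

  set Y : ℕ → Ω → ℝ := fun n => (fun x => (x - μ[ξ n]) / b n) ∘ ξ n with hYdef
  have hYmeas : ∀ n, Measurable (Y n) := fun n =>
    ((measurable_id.sub_const _).div_const _).comp (hmeas n)
  have hYsm : ∀ n, StronglyMeasurable (Y n) := fun n => (hYmeas n).stronglyMeasurable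
  have hYL2 : ∀ n, MemLp (Y n) 2 μ := by
    intro n
    have : Y n = (b n)⁻¹ • (ξ n - fun _ => μ[ξ n]) := by
      funext ω
      simp [hYdef, div_eq_inv_mul]
    rw [this]
    exact ((hL2 n).sub (memLp_const _)).const_smul _
  have hYint : ∀ n, Integrable (Y n) μ := fun n => (hYL2 n).integrable one_le_two
  have hξint : ∀ n, Integrable (ξ n) μ := fun n => (hL2 n).integrable one_le_two
  have hYmean : ∀ n, μ[Y n] = 0 := by
    intro n
    have : μ[Y n] = (μ[ξ n] - μ[ξ n]) / b n := by
      rw [hYdef]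
      simp only [Function.comp]
      rw [integral_div, integral_sub (hξint n) (integrable_const _), integral_const]
      simp
    rw [this, sub_self, zero_div]
  have hYvar : ∀ n, variance (Y n) μ = variance (ξ n) μ / b n ^ 2 := fun n =>
    aux_var_div (ξ n) _ _ (hbpos n) (hξint n)
  have hYindep : iIndepFun Y μ :=
    hindep.comp _ fun n => (measurable_id.sub_const _).div_const _
  -- the martingale of partial sums
  set ℱ := Filtration.natural Y hYsm with hF
  set S : ℕ → Ω → ℝ := fun n => ∑ k ∈ range (n + 1), Y k with hSdef
  have hSapp : ∀ n, S n = fun ω => ∑ k ∈ range (n + 1), Y k ω := by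
    intro n; funext ω; rw [hSdef]; simp
  have hSadp : StronglyAdapted ℱ S := by
    intro n
    refine Finset.stronglyMeasurable_sum _ fun k hk => ?_
    exact (Filtration.stronglyAdapted_natural hYsm k).mono (ℱ.mono (Nat.lt_succ_iff.mp (mem_range.1 hk)))
  have hSint : ∀ n, Integrable (S n) μ := by
    intro n
    rw [hSapp n]
    exact integrable_finset_sum _ fun k _ => hYint k
  have hmart : Martingale S ℱ μ := by
    refine martingale_of_condExp_sub_eq_zero_nat hSadp hSint fun n => ?_
    have hdiff : S (n + 1) - S n = Y (n + 1) := by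
      rw [hSdef]
      simp only []
      rw [Finset.sum_range_succ (f := Y) (n := n + 1)]
      abel
    rw [hdiff]
    refine (hYindep.condExp_natural_ae_eq_of_lt hYsm (Nat.lt_succ_self n)).trans ?_
    rw [hYmean (n + 1)]
    rfl
  -- L¹ boundedness via the second moment
  set V : ℝ := ∑' n, variance (ξ n) μ / b n ^ 2 with hV
  have hterm_nonneg : ∀ n, 0 ≤ variance (ξ n) μ / b n ^ 2 := fun n =>
    div_nonneg (variance_nonneg _ _) (sq_nonneg _)
  have hSL2 : ∀ n, MemLp (S n) 2 μ := fun n => memLp_finset_sum' _ fun k _ => hYL2 k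
  have hSmean : ∀ n, μ[S n] = 0 := by
    intro n
    rw [hSapp n, integral_finset_sum _ fun k _ => hYint k]
    simp [hYmean]
  have hSvar : ∀ n, variance (S n) μ ≤ V := by
    intro n
    have h1 : variance (S n) μ = ∑ k ∈ range (n + 1), variance (Y k) μ := by
      refine IndepFun.variance_sum (fun k _ => hYL2 k) ?_
      intro i _ j _ hij
      exact hYindep.indepFun hij
    rw [h1]
    calc ∑ k ∈ range (n + 1), variance (Y k) μ
        = ∑ k ∈ range (n + 1), variance (ξ k) μ / b k ^ 2 :=
          Finset.sum_congr rfl fun k _ => hYvar k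
      _ ≤ V := Summable.sum_le_tsum _ (fun k _ => hterm_nonneg k) hsum
  set Rtop : ℝ≥0∞ := ENNReal.ofReal V ^ (1 / 2 : ℝ) with hR
  have hRtop_ne : Rtop ≠ ∞ :=
    ENNReal.rpow_ne_top_of_nonneg (by norm_num) ENNReal.ofReal_ne_top
  have hbdd : ∀ n, eLpNorm (S n) 1 μ ≤ Rtop.toNNReal := by
    intro n
    have h12 : eLpNorm (S n) 1 μ ≤ eLpNorm (S n) 2 μ :=
      eLpNorm_le_eLpNorm_of_exponent_le (by norm_num) (hSL2 n).aestronglyMeasurable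
    have h2 : eLpNorm (S n) 2 μ = evariance (S n) μ ^ (1 / 2 : ℝ) := by
      rw [eLpNorm_eq_lintegral_rpow_enorm_toReal two_ne_zero ENNReal.ofNat_ne_top]
      unfold evariance
      rw [hSmean n]
      simp only [sub_zero, ENNReal.toReal_ofNat]
      congr 1
      congr 1 with ω
      rw [← ENNReal.rpow_two]
    have h3 : evariance (S n) μ ≤ ENNReal.ofReal V := by
      rw [← (hSL2 n).ofReal_variance_eq]
      exact ENNReal.ofReal_le_ofReal (hSvar n)
    have h4 : eLpNorm (S n) 2 μ ≤ Rtop := by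
      rw [h2, hR]
      exact ENNReal.rpow_le_rpow h3 (by norm_num)
    rw [ENNReal.coe_toNNReal hRtop_ne]
    exact h12.trans h4
  have hconv := hmart.submartingale.exists_ae_tendsto_of_bdd hbdd
  filter_upwards [hconv] with ω hω
  obtain ⟨c, hc⟩ := hω
  -- partial sums of (ξ k ω - E ξ k)/b k converge
  have hs : Tendsto (fun n => ∑ k ∈ range n, (ξ k ω - μ[ξ k]) / b k) atTop (nhds c) := by
    rw [← tendsto_add_atTop_iff_nat 1]
    convert hc using 2 with n
    rw [hSapp n]
    simp [hYdef, Function.comp]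
  exact aux_kronecker hmono hbpos hbtop hs
end

section
/- Product estimate in Fourier: for smooth 2π-periodic functions f, g, h on the 3-torus with f and g of zero mean, any r ≥ 0 and ε > 0, |⟨A^r(fg), h⟩| ≤ C_r (‖A^r f‖ ‖A^{3/4+ε} g‖ + ‖A^{3/4+ε} f‖ ‖A^r g‖) ‖h‖, where A^s acts on Fourier modes by multiplication by |k|^{2s} and ‖·‖ is the L^2 norm. -/
set_option maxHeartbeats 1000000


/-- Euclidean norm of a lattice vector. -/
noncomputable def znorm (k : Fin 3 → ℤ) : ℝ := Real.sqrt (∑ i, ((k i : ℝ)) ^ 2)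

/-- The norm `‖A^s f‖` in Fourier variables: `(∑_j |j|^{4s} |f̂_j|²)^{1/2}`. -/
noncomputable def sobNorm (s : ℝ) (f : (Fin 3 → ℤ) → ℂ) : ℝ :=
  Real.sqrt (∑' j : Fin 3 → ℤ, znorm j ^ (4 * s) * ‖f j‖ ^ 2)

open scoped ENNReal

namespace Stmt13

abbrev ι := Fin 3 → ℤ

lemma znorm_nonneg (k : ι) : 0 ≤ znorm k := Real.sqrt_nonneg _

lemma sum_sq_nonneg (k : ι) : 0 ≤ ∑ i, ((k i : ℝ)) ^ 2 :=
  Finset.sum_nonneg fun i _ => sq_nonneg _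

lemma one_le_sum_sq {k : ι} (hk : k ≠ 0) : 1 ≤ ∑ i, ((k i : ℝ)) ^ 2 := by
  have : ∃ i, k i ≠ 0 := by
    by_contra hc
    push_neg at hc
    exact hk (funext fun i => hc i)
  obtain ⟨i, hi⟩ := this
  have h1 : (1 : ℝ) ≤ ((k i : ℝ)) ^ 2 := by
    have : (1 : ℤ) ≤ (k i) ^ 2 := by
      rcases lt_or_gt_of_ne hi with h | h <;> nlinarith
    exact_mod_cast this
  calc (1:ℝ) ≤ ((k i:ℝ))^2 := h1
    _ ≤ ∑ i, ((k i : ℝ)) ^ 2 :=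
      Finset.single_le_sum (f := fun i => ((k i:ℝ))^2) (fun j _ => sq_nonneg _) (Finset.mem_univ i)

lemma znorm_pos {k : ι} (hk : k ≠ 0) : 0 < znorm k :=
  Real.sqrt_pos.mpr (lt_of_lt_of_le one_pos (one_le_sum_sq hk))

noncomputable def emb (k : ι) : EuclideanSpace ℝ (Fin 3) := WithLp.toLp 2 (fun i => (k i : ℝ))

lemma znorm_eq_norm (k : ι) : znorm k = ‖emb k‖ := by
  have : ‖emb k‖ = Real.sqrt (∑ i, ‖emb k i‖ ^ 2) := EuclideanSpace.norm_eq (emb k)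
  rw [this]
  unfold znorm
  congr 1
  refine Finset.sum_congr rfl fun i _ => ?_
  rw [Real.norm_eq_abs, sq_abs]
  rfl

lemma znorm_add_le (j k : ι) : znorm (j + k) ≤ znorm j + znorm k := by
  rw [znorm_eq_norm, znorm_eq_norm, znorm_eq_norm]
  have : emb (j + k) = emb j + emb k := by
    ext i
    show ((j i + k i : ℤ) : ℝ) = _
    push_cast
    rfl
  rw [this]
  exact norm_add_le _ _


lemma summable_1d {t : ℝ} (ht : 1/2 < t) :
    Summable fun n : ℤ => (1 + (n : ℝ) ^ 2) ^ (-t) := by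
  rw [← Finset.summable_compl_iff ({0} : Finset ℤ)]
  have hsum : Summable fun n : {x : ℤ // x ∉ ({0} : Finset ℤ)} => |((n : ℤ) : ℝ)| ^ (-(2*t)) :=
    (Real.summable_abs_int_rpow (by linarith)).subtype _
  apply Summable.of_nonneg_of_le (fun n => Real.rpow_nonneg (by positivity) _) _ hsum
  intro n
  have hn0 : (n : ℤ) ≠ 0 := by
    have := n.2
    simpa using this
  have habs : (1:ℝ) ≤ |((n:ℤ):ℝ)| := by
    rw [← Int.cast_abs]
    exact_mod_cast Int.one_le_abs hn0
  have h1 : |((n:ℤ):ℝ)| ^ (-(2*t)) = (|((n:ℤ):ℝ)|^2) ^ (-t) := by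
    rw [← Real.rpow_natCast |((n:ℤ):ℝ)| 2, ← Real.rpow_mul (abs_nonneg _)]
    congr 1
    push_cast
    ring
  rw [h1]
  apply Real.rpow_le_rpow_of_nonpos (by positivity) _ (by linarith)
  rw [sq_abs]
  linarith

lemma summable_prod3 {t : ℝ} (ht : 1/2 < t) :
    Summable fun k : ι => ∏ i, (1 + ((k i : ℝ)) ^ 2) ^ (-t) := by
  let e3 : ι ≃ ℤ × (ℤ × ℤ) :=
    ⟨fun k => (k 0, k 1, k 2), fun p => ![p.1, p.2.1, p.2.2],
      fun k => by funext i; fin_cases i <;> rfl, fun p => rfl⟩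
  rw [← e3.symm.summable_iff]
  have h1 := summable_1d ht
  have h12 : Summable fun p : ℤ × ℤ =>
      (1 + ((p.1 : ℝ)) ^ 2) ^ (-t) * (1 + ((p.2 : ℝ)) ^ 2) ^ (-t) :=
    h1.mul_of_nonneg h1 (fun n => Real.rpow_nonneg (by positivity) _)
      (fun n => Real.rpow_nonneg (by positivity) _)
  have h123 : Summable fun p : ℤ × (ℤ × ℤ) =>
      (1 + ((p.1 : ℝ)) ^ 2) ^ (-t) *
        ((1 + ((p.2.1 : ℝ)) ^ 2) ^ (-t) * (1 + ((p.2.2 : ℝ)) ^ 2) ^ (-t)) :=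
    h1.mul_of_nonneg h12 (fun n => Real.rpow_nonneg (by positivity) _)
      (fun p => mul_nonneg (Real.rpow_nonneg (by positivity) _) (Real.rpow_nonneg (by positivity) _))
  apply h123.congr
  intro p
  simp only [Function.comp_apply]
  show _ = ∏ i : Fin 3, (1 + ((e3.symm p i : ℝ)) ^ 2) ^ (-t)
  rw [Fin.prod_univ_three]
  have c0 : e3.symm p 0 = p.1 := rfl
  have c1 : e3.symm p 1 = p.2.1 := rfl
  have c2 : e3.symm p 2 = p.2.2 := rfl
  rw [c0, c1, c2]
  ring

/-- Summability of the lattice sum `∑_{k ≠ 0} |k|^{-s}` for `s > 3`. -/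
lemma summable_V {s : ℝ} (hs : 3 < s) :
    Summable fun k : ι => if k = 0 then 0 else znorm k ^ (-s) := by
  have ht : 1/2 < s/6 := by linarith
  have hP := (summable_prod3 ht).mul_left ((8:ℝ) ^ (s/6))
  apply Summable.of_nonneg_of_le _ _ hP
  · intro k
    by_cases hk : k = 0 <;> simp [hk, Real.rpow_nonneg (znorm_nonneg k)]
  · intro k
    by_cases hk : k = 0
    · simp only [hk, if_pos rfl]
      positivity
    · rw [if_neg hk]
      have hsum1 : (1:ℝ) ≤ ∑ i, ((k i : ℝ)) ^ 2 := one_le_sum_sq hk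
      set S2 : ℝ := ∑ i, ((k i : ℝ)) ^ 2 with hS2
      have hSpos : 0 < S2 := lt_of_lt_of_le one_pos hsum1
      -- znorm k ^ (-s) = S2 ^ (-s/2)
      have h1 : znorm k ^ (-s) = S2 ^ (-(s/2)) := by
        unfold znorm
        rw [← hS2, Real.sqrt_eq_rpow, ← Real.rpow_mul hSpos.le]
        congr 1
        ring
      rw [h1]
      -- ∏ (1+k_i²) ≤ 8 * S2³
      have hprod : ∏ i, (1 + ((k i : ℝ)) ^ 2) ≤ 8 * S2 ^ (3:ℕ) := by
        have hle : ∀ i : Fin 3, 1 + ((k i:ℝ))^2 ≤ 2 * S2 := by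
          intro i
          have : ((k i:ℝ))^2 ≤ S2 :=
            Finset.single_le_sum (f := fun i => ((k i:ℝ))^2)
              (fun j _ => sq_nonneg _) (Finset.mem_univ i)
          linarith
        calc ∏ i, (1 + ((k i : ℝ)) ^ 2) ≤ ∏ _i : Fin 3, (2 * S2) := by
              apply Finset.prod_le_prod (fun i _ => by positivity) (fun i _ => hle i)
          _ = 8 * S2 ^ (3:ℕ) := by
              rw [Finset.prod_const, Finset.card_univ, Fintype.card_fin]; ring

      -- hence S2^{-s/2} ≤ 8^{s/6} * ∏ (1+k_i²)^{-s/6}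
      have hps : ∏ i, (1 + ((k i : ℝ)) ^ 2) ^ (-(s/6))
          = (∏ i, (1 + ((k i : ℝ)) ^ 2)) ^ (-(s/6)) := by
        rw [← Real.finset_prod_rpow _ _ (fun i _ => by positivity)]
      rw [hps]
      have e8 : (8:ℝ) ^ (-(s/6)) * (8:ℝ) ^ (s/6) = 1 := by
        rw [← Real.rpow_add (by norm_num : (0:ℝ) < 8)]; norm_num
      have h2 : S2 ^ (-(s/2)) = (8 * S2 ^ (3:ℕ)) ^ (-(s/6)) * (8:ℝ) ^ (s/6) := by
        rw [Real.mul_rpow (by norm_num) (by positivity), ← Real.rpow_natCast S2 3,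
          ← Real.rpow_mul hSpos.le,
          show ((3:ℕ):ℝ) * -(s/6) = -(s/2) by push_cast; ring,
          mul_comm ((8:ℝ) ^ (-(s/6))) _, mul_assoc, e8, mul_one]
      rw [h2, mul_comm]
      apply mul_le_mul_of_nonneg_left _ (by positivity)
      exact Real.rpow_le_rpow_of_nonpos (by positivity) hprod (by linarith)


open MeasureTheory in
/-- Cauchy–Schwarz for `ℝ≥0∞`-valued tsums on a countable type. -/
lemma tsum_CS {α : Type*} [Countable α] (u v : α → ℝ≥0∞) :
    ∑' x, u x * v x ≤ (∑' x, u x ^ (2:ℝ)) ^ (1/2:ℝ) * (∑' x, v x ^ (2:ℝ)) ^ (1/2:ℝ) := by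
  letI : MeasurableSpace α := ⊤
  haveI : MeasurableSingletonClass α := ⟨fun _ => trivial⟩
  have hpq : Real.HolderConjugate 2 2 := by constructor <;> norm_num
  have h := ENNReal.lintegral_mul_le_Lp_mul_Lq (Measure.count : Measure α) hpq
    (measurable_of_countable u).aemeasurable (measurable_of_countable v).aemeasurable
  simpa [lintegral_count, Pi.mul_apply] using h

lemma sq_rpow (x : ℝ≥0∞) : x ^ (2:ℝ) = x * x := by
  rw [show (2:ℝ) = ((2:ℕ):ℝ) by norm_num, ENNReal.rpow_natCast]
  ring

lemma half_sq (x : ℝ≥0∞) : (x ^ (1/2:ℝ)) ^ (2:ℝ) = x := by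
  rw [← ENNReal.rpow_mul]
  norm_num

/-- Discrete Young inequality `‖G * H‖₂ ≤ ‖G‖₁ ‖H‖₂` (squared form). -/
lemma young (G H : ι → ℝ≥0∞) :
    ∑' j : ι, (∑' k : ι, G k * H (j + k)) ^ (2:ℝ)
      ≤ (∑' k : ι, G k) ^ (2:ℝ) * ∑' l : ι, H l ^ (2:ℝ) := by
  have inner : ∀ j : ι, (∑' k : ι, G k * H (j + k)) ^ (2:ℝ)
      ≤ (∑' k : ι, G k) * ∑' k : ι, G k * H (j + k) ^ (2:ℝ) := by
    intro j
    have hsplit : (∑' k : ι, G k * H (j + k))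
        = ∑' k : ι, G k ^ (1/2:ℝ) * (G k ^ (1/2:ℝ) * H (j + k)) := by
      refine tsum_congr fun k => ?_
      rw [← mul_assoc, ← ENNReal.rpow_add_of_nonneg (x := G k) (1/2) (1/2) (by norm_num) (by norm_num)]
      norm_num
    rw [hsplit]
    have hcs := tsum_CS (fun k : ι => G k ^ (1/2:ℝ)) (fun k : ι => G k ^ (1/2:ℝ) * H (j + k))
    have h2 := ENNReal.rpow_le_rpow hcs (by norm_num : (0:ℝ) ≤ 2)
    calc (∑' k : ι, G k ^ (1/2:ℝ) * (G k ^ (1/2:ℝ) * H (j + k))) ^ (2:ℝ)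
        ≤ ((∑' k : ι, (G k ^ (1/2:ℝ)) ^ (2:ℝ)) ^ (1/2:ℝ)
            * (∑' k : ι, (G k ^ (1/2:ℝ) * H (j + k)) ^ (2:ℝ)) ^ (1/2:ℝ)) ^ (2:ℝ) := h2
      _ = (∑' k : ι, G k) * ∑' k : ι, G k * H (j + k) ^ (2:ℝ) := by
          rw [ENNReal.mul_rpow_of_nonneg _ _ (by norm_num : (0:ℝ) ≤ 2), half_sq, half_sq]
          congr 1
          · exact tsum_congr fun k => half_sq (G k)
          · refine tsum_congr fun k => ?_
            rw [ENNReal.mul_rpow_of_nonneg _ _ (by norm_num : (0:ℝ) ≤ 2), half_sq]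
  calc ∑' j : ι, (∑' k : ι, G k * H (j + k)) ^ (2:ℝ)
      ≤ ∑' j : ι, (∑' k : ι, G k) * ∑' k : ι, G k * H (j + k) ^ (2:ℝ) :=
        ENNReal.tsum_le_tsum inner
    _ = (∑' k : ι, G k) * ∑' j : ι, ∑' k : ι, G k * H (j + k) ^ (2:ℝ) :=
        ENNReal.tsum_mul_left
    _ = (∑' k : ι, G k) * ∑' k : ι, ∑' j : ι, G k * H (j + k) ^ (2:ℝ) := by
        rw [ENNReal.tsum_comm]
    _ = (∑' k : ι, G k) * ∑' k : ι, G k * ∑' j : ι, H (j + k) ^ (2:ℝ) := by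
        congr 1
        exact tsum_congr fun k => ENNReal.tsum_mul_left
    _ = (∑' k : ι, G k) * ∑' k : ι, G k * ∑' l : ι, H l ^ (2:ℝ) := by
        congr 1
        refine tsum_congr fun k => ?_
        congr 1
        exact (Equiv.addRight k).tsum_eq (fun l => H l ^ (2:ℝ))
    _ = (∑' k : ι, G k) ^ (2:ℝ) * ∑' l : ι, H l ^ (2:ℝ) := by
        rw [ENNReal.tsum_mul_right, sq_rpow]
        ring


noncomputable def e (k : ι) : ℝ≥0∞ := ENNReal.ofReal (znorm k)

lemma e_ne_zero {k : ι} (hk : k ≠ 0) : e k ≠ 0 :=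
  (ENNReal.ofReal_pos.mpr (znorm_pos hk)).ne'

lemma e_ne_top (k : ι) : e k ≠ ⊤ := ENNReal.ofReal_ne_top

/-- The `ℓ¹` bound via Cauchy–Schwarz and the lattice sum. -/
lemma l1_bound {σ : ℝ} (hσ : 3 < σ) (G : ι → ℝ≥0∞) (hG0 : G 0 = 0) :
    ∑' k : ι, G k
      ≤ (ENNReal.ofReal (∑' k : ι, if k = 0 then 0 else znorm k ^ (-σ))) ^ (1/2:ℝ)
        * (∑' k : ι, e k ^ σ * G k ^ (2:ℝ)) ^ (1/2:ℝ) := by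
  set u : ι → ℝ≥0∞ := fun k => if k = 0 then 0 else e k ^ (-(σ/2)) with hu
  set w : ι → ℝ≥0∞ := fun k => e k ^ (σ/2) * G k with hw
  have hGuw : ∀ k, G k = u k * w k := by
    intro k
    by_cases hk : k = 0
    · simp [hk, hu, hG0]
    · simp only [hu, hw, if_neg hk]
      rw [← mul_assoc, ← ENNReal.rpow_add _ _ (e_ne_zero hk) (e_ne_top k)]
      norm_num
  have hcs := tsum_CS u w
  have hstep : ∑' k : ι, G k ≤ (∑' k : ι, u k ^ (2:ℝ)) ^ (1/2:ℝ)
      * (∑' k : ι, w k ^ (2:ℝ)) ^ (1/2:ℝ) := by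
    calc ∑' k : ι, G k = ∑' k : ι, u k * w k := tsum_congr hGuw
      _ ≤ _ := hcs
  have hu2 : ∑' k : ι, u k ^ (2:ℝ)
      = ENNReal.ofReal (∑' k : ι, if k = 0 then 0 else znorm k ^ (-σ)) := by
    rw [ENNReal.ofReal_tsum_of_nonneg]
    · refine tsum_congr fun k => ?_
      by_cases hk : k = 0
      · simp [hk, hu, ENNReal.zero_rpow_of_pos (by norm_num : (0:ℝ) < 2)]
      · simp only [hu, if_neg hk]
        rw [← ENNReal.rpow_mul, show (-(σ/2))*(2:ℝ) = -σ by ring,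
          ← ENNReal.ofReal_rpow_of_pos (znorm_pos hk)]
        rfl
    · intro k
      by_cases hk : k = 0 <;> simp [hk, Real.rpow_nonneg (znorm_nonneg k)]
    · exact summable_V hσ
  have hw2 : ∀ k, w k ^ (2:ℝ) = e k ^ σ * G k ^ (2:ℝ) := by
    intro k
    rw [hw]
    rw [ENNReal.mul_rpow_of_nonneg _ _ (by norm_num : (0:ℝ) ≤ 2), ← ENNReal.rpow_mul]
    norm_num
  calc ∑' k : ι, G k ≤ (∑' k : ι, u k ^ (2:ℝ)) ^ (1/2:ℝ)
        * (∑' k : ι, w k ^ (2:ℝ)) ^ (1/2:ℝ) := hstep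
    _ = _ := by rw [hu2]; congr 1; exact congrArg (· ^ (1/2:ℝ)) (tsum_congr hw2)

/-- Bound for one of the two main terms. -/
lemma T_bound (A G H : ι → ℝ≥0∞) :
    ∑' p : ι × ι, A p.1 * (G p.2 * H (p.1 + p.2))
      ≤ (∑' j : ι, A j ^ (2:ℝ)) ^ (1/2:ℝ)
        * ((∑' k : ι, G k) * (∑' l : ι, H l ^ (2:ℝ)) ^ (1/2:ℝ)) := by
  rw [ENNReal.tsum_prod (f := fun a b => A a * (G b * H (a + b)))]
  have h1 : ∀ j : ι, ∑' k : ι, A j * (G k * H (j + k)) = A j * ∑' k : ι, G k * H (j + k) :=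
    fun j => ENNReal.tsum_mul_left
  calc ∑' j : ι, ∑' k : ι, A j * (G k * H (j + k))
      = ∑' j : ι, A j * ∑' k : ι, G k * H (j + k) := tsum_congr h1
    _ ≤ (∑' j : ι, A j ^ (2:ℝ)) ^ (1/2:ℝ)
        * (∑' j : ι, (∑' k : ι, G k * H (j + k)) ^ (2:ℝ)) ^ (1/2:ℝ) := tsum_CS _ _
    _ ≤ (∑' j : ι, A j ^ (2:ℝ)) ^ (1/2:ℝ)
        * ((∑' k : ι, G k) ^ (2:ℝ) * ∑' l : ι, H l ^ (2:ℝ)) ^ (1/2:ℝ) := by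
        apply mul_le_mul_right
        exact ENNReal.rpow_le_rpow (young G H) (by norm_num)
    _ = (∑' j : ι, A j ^ (2:ℝ)) ^ (1/2:ℝ)
        * ((∑' k : ι, G k) * (∑' l : ι, H l ^ (2:ℝ)) ^ (1/2:ℝ)) := by
        rw [ENNReal.mul_rpow_of_nonneg _ _ (by norm_num : (0:ℝ) ≤ 1/2)]
        congr 2
        rw [← ENNReal.rpow_mul]
        norm_num


lemma e_add_rpow {t : ℝ} (ht : 0 ≤ t) (j k : ι) :
    e (j + k) ^ t ≤ (2:ℝ≥0∞) ^ t * (e j ^ t + e k ^ t) := by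
  have tri : e (j + k) ≤ e j + e k := by
    unfold e
    rw [← ENNReal.ofReal_add (znorm_nonneg j) (znorm_nonneg k)]
    exact ENNReal.ofReal_le_ofReal (znorm_add_le j k)
  have hmax : e j + e k ≤ 2 * (e j ⊔ e k) := by
    rw [two_mul]
    exact add_le_add (le_max_left _ _) (le_max_right _ _)
  calc e (j + k) ^ t ≤ (2 * (e j ⊔ e k)) ^ t :=
        ENNReal.rpow_le_rpow (tri.trans hmax) ht
    _ = (2:ℝ≥0∞) ^ t * (e j ⊔ e k) ^ t := ENNReal.mul_rpow_of_nonneg _ _ ht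
    _ ≤ (2:ℝ≥0∞) ^ t * (e j ^ t + e k ^ t) := by
        apply mul_le_mul_right
        rcases le_total (e j) (e k) with hjk | hjk
        · rw [sup_of_le_right hjk]
          exact le_add_self
        · rw [sup_of_le_left hjk]
          exact le_add_right (le_refl _)

lemma ofReal_sq {x : ℝ} (hx : 0 ≤ x) :
    (ENNReal.ofReal x) ^ (2:ℝ) = ENNReal.ofReal (x ^ (2:ℕ)) := by
  rw [ENNReal.ofReal_rpow_of_nonneg hx (by norm_num : (0:ℝ) ≤ 2)]
  congr 1
  rw [show (2:ℝ) = ((2:ℕ):ℝ) by norm_num, Real.rpow_natCast]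

lemma sob_factor {t : ℝ} (ht : 0 ≤ t) (φ : ι → ℂ)
    (hφ : Summable fun j : ι => znorm j ^ t * ‖φ j‖ ^ 2) :
    (∑' j : ι, e j ^ t * (ENNReal.ofReal ‖φ j‖) ^ (2:ℝ)) ^ (1/2:ℝ)
      = ENNReal.ofReal (Real.sqrt (∑' j : ι, znorm j ^ t * ‖φ j‖ ^ 2)) := by
  have hterm : ∀ j : ι, e j ^ t * (ENNReal.ofReal ‖φ j‖) ^ (2:ℝ)
      = ENNReal.ofReal (znorm j ^ t * ‖φ j‖ ^ 2) := by
    intro j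
    rw [ENNReal.ofReal_mul (Real.rpow_nonneg (znorm_nonneg j) t), ofReal_sq (norm_nonneg _)]
    congr 1
    rw [← ENNReal.ofReal_rpow_of_nonneg (znorm_nonneg j) ht]
    rfl
  rw [tsum_congr hterm, ← ENNReal.ofReal_tsum_of_nonneg
    (fun j => mul_nonneg (Real.rpow_nonneg (znorm_nonneg j) t) (sq_nonneg _)) hφ]
  rw [Real.sqrt_eq_rpow, ENNReal.ofReal_rpow_of_nonneg
    (tsum_nonneg fun j => mul_nonneg (Real.rpow_nonneg (znorm_nonneg j) t) (sq_nonneg _))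
    (by norm_num : (0:ℝ) ≤ 1/2)]

lemma norm_le_tsum {φ : ι → ℂ} (hφ : Summable fun j : ι => ‖φ j‖) (k : ι) :
    ‖φ k‖ ≤ ∑' j : ι, ‖φ j‖ :=
  Summable.le_tsum hφ k fun _ _ => norm_nonneg _

lemma summable_sq {φ : ι → ℂ} (hφ : ∀ s : ℝ, Summable fun j : ι => znorm j ^ s * ‖φ j‖)
    (t : ℝ) : Summable fun j : ι => znorm j ^ t * ‖φ j‖ ^ 2 := by
  have h0 : Summable fun j : ι => ‖φ j‖ := by simpa using hφ 0
  set M := ∑' j : ι, ‖φ j‖ with hM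
  apply Summable.of_nonneg_of_le
    (fun j => mul_nonneg (Real.rpow_nonneg (znorm_nonneg j) t) (sq_nonneg _))
    _ ((hφ t).mul_left M)
  intro j
  have : ‖φ j‖ ^ 2 ≤ M * ‖φ j‖ := by
    rw [sq]
    exact mul_le_mul_of_nonneg_right (norm_le_tsum h0 j) (norm_nonneg _)
  calc znorm j ^ t * ‖φ j‖ ^ 2 ≤ znorm j ^ t * (M * ‖φ j‖) :=
        mul_le_mul_of_nonneg_left this (Real.rpow_nonneg (znorm_nonneg j) t)
    _ = M * (znorm j ^ t * ‖φ j‖) := by ring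


/-- The shear equivalence `(j,k) ↦ (j+k, j)` on `ι × ι`. -/
def shear : (ι × ι) ≃ (ι × ι) :=
  ⟨fun q => (q.1 + q.2, q.1), fun p => (p.2, p.1 - p.2),
    fun q => by simp, fun p => by simp⟩

end Stmt13


open Stmt13 in
/-- Product estimate in Fourier variables: for smooth (rapidly decaying Fourier
coefficients) zero-mean `f, g` and smooth `h`, any `r ≥ 0` and `ε > 0`,
`|⟨A^r(fg), h⟩| ≤ C_r (‖A^r f‖‖A^{3/4+ε} g‖ + ‖A^{3/4+ε} f‖‖A^r g‖)‖h‖`,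
where `(fg)` is the convolution of coefficients and `A^s` multiplies the `j`-th
coefficient by `|j|^{2s}`. -/
theorem stmt13 (r ε : ℝ) (hr : 0 ≤ r) (hε : 0 < ε) :
    ∃ C : ℝ, 0 < C ∧ ∀ f g h : (Fin 3 → ℤ) → ℂ,
      (∀ s : ℝ, Summable fun j => znorm j ^ s * ‖f j‖) →
      (∀ s : ℝ, Summable fun j => znorm j ^ s * ‖g j‖) →
      (∀ s : ℝ, Summable fun j => znorm j ^ s * ‖h j‖) →
      f 0 = 0 → g 0 = 0 →
      ‖∑' l : Fin 3 → ℤ,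
          ((znorm l ^ (2 * r) : ℝ) : ℂ) * (∑' j : Fin 3 → ℤ, f j * g (l - j))
            * (starRingEnd ℂ) (h l)‖
        ≤ C * (sobNorm r f * sobNorm (3 / 4 + ε) g + sobNorm (3 / 4 + ε) f * sobNorm r g)
            * Real.sqrt (∑' l : Fin 3 → ℤ, ‖h l‖ ^ 2) := by
  classical
  set σ : ℝ := 3 + 4 * ε with hσdef
  have hσ : 3 < σ := by rw [hσdef]; linarith
  set cV : ℝ := ∑' k : ι, if k = 0 then 0 else znorm k ^ (-σ) with hcVdef
  have hcV0 : 0 ≤ cV :=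
    tsum_nonneg fun k => by
      by_cases hk : k = 0 <;> simp [hk, Real.rpow_nonneg (znorm_nonneg k)]
  have h2r : (0:ℝ) ≤ 2 * r := by linarith
  refine ⟨2 ^ (2 * r) * Real.sqrt cV + 1, by positivity, ?_⟩
  intro f g h hf hg hh hf0 hg0
  -- real-side summability
  have hfs : Summable fun j : ι => ‖f j‖ := by simpa using hf 0
  have hgs : Summable fun j : ι => ‖g j‖ := by simpa using hg 0
  have hhs : Summable fun j : ι => ‖h j‖ := by simpa using hh 0
  set Mf : ℝ := ∑' j : ι, ‖f j‖ with hMf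
  set Mg : ℝ := ∑' j : ι, ‖g j‖ with hMg
  have hconv : ∀ l : ι, Summable fun j : ι => ‖f j‖ * ‖g (l - j)‖ := by
    intro l
    apply Summable.of_nonneg_of_le (fun j => by positivity) _ (hfs.mul_right Mg)
    intro j
    exact mul_le_mul_of_nonneg_left (norm_le_tsum hgs _) (norm_nonneg _)
  set term : ι → ℝ :=
    fun l => znorm l ^ (2 * r) * ‖∑' j : ι, f j * g (l - j)‖ * ‖h l‖ with hterm_def
  have hterm_nonneg : ∀ l, 0 ≤ term l := fun l =>
    mul_nonneg (mul_nonneg (Real.rpow_nonneg (znorm_nonneg l) _) (norm_nonneg _))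
      (norm_nonneg _)
  have hconvle : ∀ l : ι, ‖∑' j : ι, f j * g (l - j)‖ ≤ Mf * Mg := by
    intro l
    calc ‖∑' j : ι, f j * g (l - j)‖ ≤ ∑' j : ι, ‖f j * g (l - j)‖ :=
          norm_tsum_le_tsum_norm (by simpa [norm_mul] using hconv l)
      _ = ∑' j : ι, ‖f j‖ * ‖g (l - j)‖ := by simp [norm_mul]
      _ ≤ ∑' j : ι, ‖f j‖ * Mg :=
          Summable.tsum_le_tsum
            (fun j => mul_le_mul_of_nonneg_left (norm_le_tsum hgs _) (norm_nonneg _))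
            (hconv l) (hfs.mul_right Mg)
      _ = Mf * Mg := by rw [tsum_mul_right]
  have htermsum : Summable term := by
    apply Summable.of_nonneg_of_le hterm_nonneg _ ((hh (2 * r)).mul_left (Mf * Mg))
    intro l
    calc term l ≤ znorm l ^ (2 * r) * (Mf * Mg) * ‖h l‖ :=
          mul_le_mul_of_nonneg_right
            (mul_le_mul_of_nonneg_left (hconvle l)
              (Real.rpow_nonneg (znorm_nonneg l) _)) (norm_nonneg _)
      _ = Mf * Mg * (znorm l ^ (2 * r) * ‖h l‖) := by ring
  -- Step 1 : bound by the real tsum of norms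
  have hzn : ∀ l : ι,
      ‖((znorm l ^ (2 * r) : ℝ) : ℂ) * (∑' j : ι, f j * g (l - j))
        * (starRingEnd ℂ) (h l)‖ = term l := by
    intro l
    rw [norm_mul, norm_mul, Complex.norm_real, Real.norm_eq_abs,
      abs_of_nonneg (Real.rpow_nonneg (znorm_nonneg l) _), RCLike.norm_conj]
  have step1 : ‖∑' l : ι, ((znorm l ^ (2 * r) : ℝ) : ℂ)
        * (∑' j : ι, f j * g (l - j)) * (starRingEnd ℂ) (h l)‖ ≤ ∑' l : ι, term l := by
    calc ‖∑' l : ι, ((znorm l ^ (2 * r) : ℝ) : ℂ)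
          * (∑' j : ι, f j * g (l - j)) * (starRingEnd ℂ) (h l)‖
        ≤ ∑' l : ι, ‖((znorm l ^ (2 * r) : ℝ) : ℂ)
          * (∑' j : ι, f j * g (l - j)) * (starRingEnd ℂ) (h l)‖ :=
          norm_tsum_le_tsum_norm (htermsum.congr fun l => (hzn l).symm)
      _ = ∑' l : ι, term l := tsum_congr hzn
  -- ENNReal-valued coefficients
  set Fe : ι → ℝ≥0∞ := fun j => ENNReal.ofReal ‖f j‖ with hFe
  set Ge : ι → ℝ≥0∞ := fun j => ENNReal.ofReal ‖g j‖ with hGe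
  set He : ι → ℝ≥0∞ := fun j => ENNReal.ofReal ‖h j‖ with hHe
  -- Step 2 : real tsum equals toReal of the ENNReal tsum
  have step2 : ∑' l : ι, term l = (∑' l : ι, ENNReal.ofReal (term l)).toReal := by
    rw [← ENNReal.ofReal_tsum_of_nonneg hterm_nonneg htermsum,
      ENNReal.toReal_ofReal (tsum_nonneg hterm_nonneg)]
  -- Step 3 : pointwise domination in ℝ≥0∞
  have hterm_le : ∀ l : ι, ENNReal.ofReal (term l)
      ≤ e l ^ (2 * r) * (∑' j : ι, Fe j * Ge (l - j)) * He l := by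
    intro l
    show ENNReal.ofReal (znorm l ^ (2 * r) * ‖∑' j : ι, f j * g (l - j)‖ * ‖h l‖) ≤ _
    rw [ENNReal.ofReal_mul
        (mul_nonneg (Real.rpow_nonneg (znorm_nonneg l) _) (norm_nonneg _)),
      ENNReal.ofReal_mul (Real.rpow_nonneg (znorm_nonneg l) _)]
    have h1 : ENNReal.ofReal (znorm l ^ (2 * r)) = e l ^ (2 * r) := by
      rw [← ENNReal.ofReal_rpow_of_nonneg (znorm_nonneg l) h2r]
      rfl
    have h2 : ENNReal.ofReal ‖∑' j : ι, f j * g (l - j)‖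
        ≤ ∑' j : ι, Fe j * Ge (l - j) := by
      calc ENNReal.ofReal ‖∑' j : ι, f j * g (l - j)‖
          ≤ ENNReal.ofReal (∑' j : ι, ‖f j‖ * ‖g (l - j)‖) := by
            apply ENNReal.ofReal_le_ofReal
            calc ‖∑' j : ι, f j * g (l - j)‖ ≤ ∑' j : ι, ‖f j * g (l - j)‖ :=
                  norm_tsum_le_tsum_norm (by simpa [norm_mul] using hconv l)
              _ = ∑' j : ι, ‖f j‖ * ‖g (l - j)‖ := by simp [norm_mul]
        _ = ∑' j : ι, Fe j * Ge (l - j) := by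
            rw [ENNReal.ofReal_tsum_of_nonneg (fun j => by positivity) (hconv l)]
            exact tsum_congr fun j => ENNReal.ofReal_mul (norm_nonneg _)
    rw [h1]
    exact mul_le_mul' (mul_le_mul' le_rfl h2) le_rfl
  have step3 : (∑' l : ι, ENNReal.ofReal (term l))
      ≤ ∑' l : ι, e l ^ (2 * r) * (∑' j : ι, Fe j * Ge (l - j)) * He l :=
    ENNReal.tsum_le_tsum hterm_le
  -- Step 4 : rewrite as a sum over pairs and shear
  have step4 : ∑' l : ι, e l ^ (2 * r) * (∑' j : ι, Fe j * Ge (l - j)) * He l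
      = ∑' q : ι × ι, e (q.1 + q.2) ^ (2 * r) * Fe q.1 * Ge q.2 * He (q.1 + q.2) := by
    have hrw : ∀ l : ι, e l ^ (2 * r) * (∑' j : ι, Fe j * Ge (l - j)) * He l
        = ∑' j : ι, e l ^ (2 * r) * Fe j * Ge (l - j) * He l := by
      intro l
      rw [← ENNReal.tsum_mul_left, ← ENNReal.tsum_mul_right]
      exact tsum_congr fun j => by ring
    rw [tsum_congr hrw,
      ← ENNReal.tsum_prod (f := fun l j => e l ^ (2 * r) * Fe j * Ge (l - j) * He l),
      ← shear.tsum_eq (fun p : ι × ι => e p.1 ^ (2 * r) * Fe p.2 * Ge (p.1 - p.2) * He p.1)]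
    refine tsum_congr fun q => ?_
    show e (q.1 + q.2) ^ (2 * r) * Fe q.1 * Ge (q.1 + q.2 - q.1) * He (q.1 + q.2) = _
    rw [add_sub_cancel_left]
  -- Step 5 : pointwise triangle bound and split into two terms
  set ψ1 : ι × ι → ℝ≥0∞ :=
    fun q => (e q.1 ^ (2 * r) * Fe q.1) * (Ge q.2 * He (q.1 + q.2)) with hψ1
  set ψ2 : ι × ι → ℝ≥0∞ :=
    fun q => (e q.2 ^ (2 * r) * Ge q.2) * (Fe q.1 * He (q.1 + q.2)) with hψ2
  have step5 : ∑' q : ι × ι, e (q.1 + q.2) ^ (2 * r) * Fe q.1 * Ge q.2 * He (q.1 + q.2)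
      ≤ (2:ℝ≥0∞) ^ (2 * r) * ((∑' q : ι × ι, ψ1 q) + ∑' q : ι × ι, ψ2 q) := by
    rw [← ENNReal.tsum_add, ← ENNReal.tsum_mul_left]
    apply ENNReal.tsum_le_tsum
    intro q
    calc e (q.1 + q.2) ^ (2 * r) * Fe q.1 * Ge q.2 * He (q.1 + q.2)
        ≤ ((2:ℝ≥0∞) ^ (2 * r) * (e q.1 ^ (2 * r) + e q.2 ^ (2 * r)))
            * Fe q.1 * Ge q.2 * He (q.1 + q.2) := by
          gcongr
          exact e_add_rpow h2r q.1 q.2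
      _ = (2:ℝ≥0∞) ^ (2 * r) * (ψ1 q + ψ2 q) := by
          rw [hψ1, hψ2]
          ring
  -- Step 6 : bound each term
  have hYf : ∑' k : ι, Fe k
      ≤ (ENNReal.ofReal cV) ^ (1/2:ℝ) * (∑' k : ι, e k ^ σ * Fe k ^ (2:ℝ)) ^ (1/2:ℝ) := by
    rw [hcVdef]
    exact l1_bound hσ Fe (by simp [hFe, hf0])
  have hYg : ∑' k : ι, Ge k
      ≤ (ENNReal.ofReal cV) ^ (1/2:ℝ) * (∑' k : ι, e k ^ σ * Ge k ^ (2:ℝ)) ^ (1/2:ℝ) := by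
    rw [hcVdef]
    exact l1_bound hσ Ge (by simp [hGe, hg0])
  have hT1 : ∑' q : ι × ι, ψ1 q
      ≤ (∑' j : ι, (e j ^ (2*r) * Fe j) ^ (2:ℝ)) ^ (1/2:ℝ)
        * ((∑' k : ι, Ge k) * (∑' l : ι, He l ^ (2:ℝ)) ^ (1/2:ℝ)) := by
    rw [hψ1]
    exact T_bound (fun j => e j ^ (2*r) * Fe j) Ge He
  have hT2 : ∑' q : ι × ι, ψ2 q
      ≤ (∑' j : ι, (e j ^ (2*r) * Ge j) ^ (2:ℝ)) ^ (1/2:ℝ)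
        * ((∑' k : ι, Fe k) * (∑' l : ι, He l ^ (2:ℝ)) ^ (1/2:ℝ)) := by
    have hswap : ∑' q : ι × ι, ψ2 q
        = ∑' q : ι × ι, (e q.1 ^ (2*r) * Ge q.1) * (Fe q.2 * He (q.1 + q.2)) := by
      rw [← (Equiv.prodComm ι ι).tsum_eq ψ2]
      refine tsum_congr fun q => ?_
      show ψ2 (q.2, q.1) = _
      rw [hψ2]
      show (e q.1 ^ (2*r) * Ge q.1) * (Fe q.2 * He (q.2 + q.1)) = _
      rw [add_comm q.2 q.1]
    rw [hswap]
    exact T_bound (fun j => e j ^ (2*r) * Ge j) Fe He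
  -- identify the factors with `sobNorm`s
  have hsq : ∀ (t : ℝ) (X : ι → ℝ≥0∞) (j : ι),
      (e j ^ t * X j) ^ (2:ℝ) = e j ^ (t * 2) * X j ^ (2:ℝ) := by
    intro t X j
    rw [ENNReal.mul_rpow_of_nonneg _ _ (by norm_num : (0:ℝ) ≤ 2), ← ENNReal.rpow_mul]
  have hXF : (∑' j : ι, (e j ^ (2*r) * Fe j) ^ (2:ℝ)) ^ (1/2:ℝ)
      = ENNReal.ofReal (sobNorm r f) := by
    rw [tsum_congr (hsq (2*r) Fe), show (2*r) * 2 = 4 * r by ring]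
    exact sob_factor (by linarith) f (summable_sq hf (4*r))
  have hXG : (∑' j : ι, (e j ^ (2*r) * Ge j) ^ (2:ℝ)) ^ (1/2:ℝ)
      = ENNReal.ofReal (sobNorm r g) := by
    rw [tsum_congr (hsq (2*r) Ge), show (2*r) * 2 = 4 * r by ring]
    exact sob_factor (by linarith) g (summable_sq hg (4*r))
  have hexp : 4 * (3 / 4 + ε) = σ := by rw [hσdef]; ring
  have hYF : (∑' k : ι, e k ^ σ * Fe k ^ (2:ℝ)) ^ (1/2:ℝ)
      = ENNReal.ofReal (sobNorm (3 / 4 + ε) f) := by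
    unfold sobNorm
    rw [hexp]
    exact sob_factor (by rw [hσdef]; linarith) f (summable_sq hf σ)
  have hYG : (∑' k : ι, e k ^ σ * Ge k ^ (2:ℝ)) ^ (1/2:ℝ)
      = ENNReal.ofReal (sobNorm (3 / 4 + ε) g) := by
    unfold sobNorm
    rw [hexp]
    exact sob_factor (by rw [hσdef]; linarith) g (summable_sq hg σ)
  have hZ : (∑' l : ι, He l ^ (2:ℝ)) ^ (1/2:ℝ)
      = ENNReal.ofReal (Real.sqrt (∑' l : ι, ‖h l‖ ^ 2)) := by
    have h1 : ∀ l : ι, He l ^ (2:ℝ) = e l ^ (0:ℝ) * He l ^ (2:ℝ) := by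
      intro l
      rw [ENNReal.rpow_zero, one_mul]
    have h2 : ∀ l : ι, znorm l ^ (0:ℝ) * ‖h l‖ ^ 2 = ‖h l‖ ^ 2 := by
      intro l
      rw [Real.rpow_zero, one_mul]
    rw [tsum_congr h1, sob_factor le_rfl h (summable_sq hh 0), tsum_congr h2]
  have hc : (ENNReal.ofReal cV) ^ (1/2:ℝ) = ENNReal.ofReal (Real.sqrt cV) := by
    rw [ENNReal.ofReal_rpow_of_nonneg hcV0 (by norm_num : (0:ℝ) ≤ 1/2),
      Real.sqrt_eq_rpow]
  -- abbreviations
  set XF := ENNReal.ofReal (sobNorm r f)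
  set XG := ENNReal.ofReal (sobNorm r g)
  set YF := ENNReal.ofReal (sobNorm (3 / 4 + ε) f)
  set YG := ENNReal.ofReal (sobNorm (3 / 4 + ε) g)
  set Z := ENNReal.ofReal (Real.sqrt (∑' l : ι, ‖h l‖ ^ 2))
  set c := ENNReal.ofReal (Real.sqrt cV)
  have hmain : (∑' l : ι, ENNReal.ofReal (term l))
      ≤ ((2:ℝ≥0∞) ^ (2*r) * c) * ((XF * YG + YF * XG) * Z) := by
    calc (∑' l : ι, ENNReal.ofReal (term l))
        ≤ ∑' l : ι, e l ^ (2 * r) * (∑' j : ι, Fe j * Ge (l - j)) * He l := step3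
      _ = ∑' q : ι × ι, e (q.1 + q.2) ^ (2 * r) * Fe q.1 * Ge q.2 * He (q.1 + q.2) := step4
      _ ≤ (2:ℝ≥0∞) ^ (2 * r) * ((∑' q : ι × ι, ψ1 q) + ∑' q : ι × ι, ψ2 q) := step5
      _ ≤ (2:ℝ≥0∞) ^ (2 * r) *
            (XF * ((c * YG) * Z) + XG * ((c * YF) * Z)) := by
          apply mul_le_mul_right
          apply add_le_add
          · calc ∑' q : ι × ι, ψ1 q
                ≤ (∑' j : ι, (e j ^ (2*r) * Fe j) ^ (2:ℝ)) ^ (1/2:ℝ)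
                  * ((∑' k : ι, Ge k) * (∑' l : ι, He l ^ (2:ℝ)) ^ (1/2:ℝ)) := hT1
              _ ≤ (∑' j : ι, (e j ^ (2*r) * Fe j) ^ (2:ℝ)) ^ (1/2:ℝ)
                  * (((ENNReal.ofReal cV) ^ (1/2:ℝ)
                      * (∑' k : ι, e k ^ σ * Ge k ^ (2:ℝ)) ^ (1/2:ℝ))
                    * (∑' l : ι, He l ^ (2:ℝ)) ^ (1/2:ℝ)) := by
                  apply mul_le_mul_right
                  exact mul_le_mul_left hYg _
              _ = XF * ((c * YG) * Z) := by rw [hXF, hYG, hZ, hc]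
          · calc ∑' q : ι × ι, ψ2 q
                ≤ (∑' j : ι, (e j ^ (2*r) * Ge j) ^ (2:ℝ)) ^ (1/2:ℝ)
                  * ((∑' k : ι, Fe k) * (∑' l : ι, He l ^ (2:ℝ)) ^ (1/2:ℝ)) := hT2
              _ ≤ (∑' j : ι, (e j ^ (2*r) * Ge j) ^ (2:ℝ)) ^ (1/2:ℝ)
                  * (((ENNReal.ofReal cV) ^ (1/2:ℝ)
                      * (∑' k : ι, e k ^ σ * Fe k ^ (2:ℝ)) ^ (1/2:ℝ))
                    * (∑' l : ι, He l ^ (2:ℝ)) ^ (1/2:ℝ)) := by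
                  apply mul_le_mul_right
                  exact mul_le_mul_left hYf _
              _ = XG * ((c * YF) * Z) := by rw [hXG, hYF, hZ, hc]
      _ = ((2:ℝ≥0∞) ^ (2*r) * c) * ((XF * YG + YF * XG) * Z) := by ring
  -- final constant comparison
  have hCge : ((2:ℝ≥0∞) ^ (2*r) * c)
      ≤ ENNReal.ofReal (2 ^ (2 * r) * Real.sqrt cV + 1) := by
    rw [ENNReal.ofReal_add (by positivity) zero_le_one, ENNReal.ofReal_one,
      ENNReal.ofReal_mul (by positivity)]
    have h2 : ENNReal.ofReal ((2:ℝ) ^ (2*r)) = (2:ℝ≥0∞) ^ (2*r) := by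
      rw [← ENNReal.ofReal_rpow_of_nonneg (by norm_num : (0:ℝ) ≤ 2) h2r]
      norm_num
    rw [h2]
    exact le_add_of_nonneg_right zero_le
  have hRHS : (∑' l : ι, ENNReal.ofReal (term l))
      ≤ ENNReal.ofReal ((2 ^ (2 * r) * Real.sqrt cV + 1)
          * (sobNorm r f * sobNorm (3 / 4 + ε) g + sobNorm (3 / 4 + ε) f * sobNorm r g)
          * Real.sqrt (∑' l : ι, ‖h l‖ ^ 2)) := by
    have hsob : ∀ s : ℝ, ∀ φ : ι → ℂ, 0 ≤ sobNorm s φ := fun s φ => Real.sqrt_nonneg _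
    have hAB : (0:ℝ) ≤ sobNorm r f * sobNorm (3 / 4 + ε) g
        + sobNorm (3 / 4 + ε) f * sobNorm r g :=
      add_nonneg (mul_nonneg (hsob _ _) (hsob _ _)) (mul_nonneg (hsob _ _) (hsob _ _))
    rw [ENNReal.ofReal_mul (mul_nonneg (by positivity) hAB),
      ENNReal.ofReal_mul (by positivity),
      ENNReal.ofReal_add (mul_nonneg (hsob _ _) (hsob _ _))
        (mul_nonneg (hsob _ _) (hsob _ _)),
      ENNReal.ofReal_mul (hsob _ _), ENNReal.ofReal_mul (hsob _ _)]
    calc (∑' l : ι, ENNReal.ofReal (term l))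
        ≤ ((2:ℝ≥0∞) ^ (2*r) * c) * ((XF * YG + YF * XG) * Z) := hmain
      _ ≤ ENNReal.ofReal (2 ^ (2 * r) * Real.sqrt cV + 1)
          * ((XF * YG + YF * XG) * Z) := mul_le_mul_left hCge _
      _ = _ := by ring
  -- conclude
  calc ‖∑' l : ι, ((znorm l ^ (2 * r) : ℝ) : ℂ)
        * (∑' j : ι, f j * g (l - j)) * (starRingEnd ℂ) (h l)‖
      ≤ ∑' l : ι, term l := step1
    _ = (∑' l : ι, ENNReal.ofReal (term l)).toReal := step2
    _ ≤ (ENNReal.ofReal ((2 ^ (2 * r) * Real.sqrt cV + 1)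
          * (sobNorm r f * sobNorm (3 / 4 + ε) g + sobNorm (3 / 4 + ε) f * sobNorm r g)
          * Real.sqrt (∑' l : ι, ‖h l‖ ^ 2))).toReal :=
        ENNReal.toReal_mono ENNReal.ofReal_ne_top hRHS
    _ ≤ (2 ^ (2 * r) * Real.sqrt cV + 1)
          * (sobNorm r f * sobNorm (3 / 4 + ε) g + sobNorm (3 / 4 + ε) f * sobNorm r g)
          * Real.sqrt (∑' l : ι, ‖h l‖ ^ 2) := by
        rw [ENNReal.toReal_ofReal]
        have hsob : ∀ s : ℝ, ∀ φ : ι → ℂ, 0 ≤ sobNorm s φ := fun s φ => Real.sqrt_nonneg _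
        have hAB : (0:ℝ) ≤ sobNorm r f * sobNorm (3 / 4 + ε) g
            + sobNorm (3 / 4 + ε) f * sobNorm r g :=
          add_nonneg (mul_nonneg (hsob _ _) (hsob _ _)) (mul_nonneg (hsob _ _) (hsob _ _))
        exact mul_nonneg (mul_nonneg (by positivity) hAB) (Real.sqrt_nonneg _)
end
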